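/- A left rigid monoidal category admits a pivotal structure (a monoidal natural isomorphism from the identity functor to the double dual functor) if and only if it is sovereign, i.e. it is also right rigid and the left and right dual functors are equal as monoidal functors. -/

import Mathlib

open CategoryTheory MonoidalCategory

namespace SovereignPaper

attribute [-instance] CategoryTheory.hasRightDualUnit
attribute [-instance] CategoryTheory.hasLeftDualUnit

variable {C : Type*} [Category C] [MonoidalCategory C] [RightRigidCategory C]

/-- The canonical coevaluation exhibiting `Yᘁ ⊗ Xᘁ` as a dual of `X ⊗ Y`. -/
noncomputable def coevTensor (X Y : C) : 𝟙_ C ⟶ (X ⊗ Y) ⊗ (Yᘁ ⊗ Xᘁ) :=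
  η_ X Xᘁ ≫ X ◁ ((λ_ (Xᘁ)).inv ≫ η_ Y Yᘁ ▷ Xᘁ ≫ (α_ Y (Yᘁ) (Xᘁ)).hom) ≫
    (α_ X Y (Yᘁ ⊗ Xᘁ)).inv

/-- The canonical evaluation exhibiting `Yᘁ ⊗ Xᘁ` as a dual of `X ⊗ Y`. -/
noncomputable def evTensor (X Y : C) : (Yᘁ ⊗ Xᘁ) ⊗ (X ⊗ Y) ⟶ 𝟙_ C :=
  (α_ (Yᘁ) (Xᘁ) (X ⊗ Y)).hom ≫
    Yᘁ ◁ ((α_ (Xᘁ) X Y).inv ≫ ε_ X Xᘁ ▷ Y ≫ (λ_ Y).hom) ≫ ε_ Y Yᘁ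

/-- The canonical comparison `(X ⊗ Y)ᘁ ⟶ Yᘁ ⊗ Xᘁ`: the monoidal structure morphism
of the (paper-)left dual functor. -/
noncomputable def lamL (X Y : C) : (X ⊗ Y)ᘁ ⟶ Yᘁ ⊗ Xᘁ :=
  (ρ_ ((X ⊗ Y)ᘁ)).inv ≫ ((X ⊗ Y)ᘁ ◁ coevTensor X Y) ≫
    (α_ ((X ⊗ Y)ᘁ) (X ⊗ Y) (Yᘁ ⊗ Xᘁ)).inv ≫
      ε_ (X ⊗ Y) ((X ⊗ Y)ᘁ) ▷ (Yᘁ ⊗ Xᘁ) ≫ (λ_ (Yᘁ ⊗ Xᘁ)).hom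

/-- The canonical comparison `Yᘁ ⊗ Xᘁ ⟶ (X ⊗ Y)ᘁ`, inverse to `lamL`. -/
noncomputable def lamInvL (X Y : C) : Yᘁ ⊗ Xᘁ ⟶ (X ⊗ Y)ᘁ :=
  (ρ_ (Yᘁ ⊗ Xᘁ)).inv ≫ ((Yᘁ ⊗ Xᘁ) ◁ η_ (X ⊗ Y) ((X ⊗ Y)ᘁ)) ≫
    (α_ (Yᘁ ⊗ Xᘁ) (X ⊗ Y) ((X ⊗ Y)ᘁ)).inv ≫
      evTensor X Y ▷ ((X ⊗ Y)ᘁ) ≫ (λ_ ((X ⊗ Y)ᘁ)).hom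

/-- The canonical unit comparison `𝟙_ C ⟶ (𝟙_ C)ᘁ` of the left dual functor. -/
noncomputable def unitL : (𝟙_ C) ⟶ (𝟙_ C)ᘁ :=
  η_ (𝟙_ C) ((𝟙_ C)ᘁ) ≫ (λ_ ((𝟙_ C)ᘁ)).hom

variable (C) in
/-- A sovereign structure on a (paper-)left rigid category `C`: a (paper-)right
duality carried by the *same* dual objects `Xᘁ` such that the resulting right dual
functor coincides with the left dual functor as a strong monoidal functor (same
object map, same action on morphisms, same monoidal and unit constraints). -/
structure SovereignStruct where
  ev' : ∀ X : C, X ⊗ Xᘁ ⟶ 𝟙_ C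
  coev' : ∀ X : C, 𝟙_ C ⟶ Xᘁ ⊗ X
  zigzag₁ : ∀ X : C,
    X ◁ coev' X ≫ (α_ X (Xᘁ) X).inv ≫ ev' X ▷ X = (ρ_ X).hom ≫ (λ_ X).inv
  zigzag₂ : ∀ X : C,
    coev' X ▷ (Xᘁ) ≫ (α_ (Xᘁ) X (Xᘁ)).hom ≫ Xᘁ ◁ ev' X
      = (λ_ (Xᘁ)).hom ≫ (ρ_ (Xᘁ)).inv
  mate_eq : ∀ {X Y : C} (f : X ⟶ Y),
    (λ_ (Yᘁ)).inv ≫ coev' X ▷ (Yᘁ) ≫ (α_ (Xᘁ) X (Yᘁ)).hom ≫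
        Xᘁ ◁ (f ▷ (Yᘁ)) ≫ Xᘁ ◁ ev' Y ≫ (ρ_ (Xᘁ)).hom = fᘁ
  mon_eq : ∀ X Y : C,
    lamL X Y
      = (λ_ ((X ⊗ Y)ᘁ)).inv ≫
          ((coev' Y ≫
              Yᘁ ◁ ((λ_ Y).inv ≫ coev' X ▷ Y ≫ (α_ (Xᘁ) X Y).hom) ≫
                (α_ (Yᘁ) (Xᘁ) (X ⊗ Y)).inv) ▷ ((X ⊗ Y)ᘁ)) ≫
            (α_ (Yᘁ ⊗ Xᘁ) (X ⊗ Y) ((X ⊗ Y)ᘁ)).hom ≫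
              ((Yᘁ ⊗ Xᘁ) ◁ ev' (X ⊗ Y)) ≫ (ρ_ (Yᘁ ⊗ Xᘁ)).hom
  unit_eq : unitL (C := C) = coev' (𝟙_ C) ≫ (ρ_ ((𝟙_ C)ᘁ)).hom

variable (C) in
/-- A pivotal structure on a (paper-)left rigid category: a monoidal natural
isomorphism from the identity functor to the double dual functor. -/
structure PivotalStruct where
  i : ∀ X : C, X ≅ (Xᘁ)ᘁ
  naturality : ∀ {X Y : C} (f : X ⟶ Y), f ≫ (i Y).hom = (i X).hom ≫ rightAdjointMate (C := C) (rightAdjointMate (C := C) f)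
  monoidal : ∀ X Y : C,
    (i (X ⊗ Y)).hom
      = ((i X).hom ⊗ₘ (i Y).hom) ≫ lamInvL (Yᘁ) (Xᘁ) ≫ (lamL X Y)ᘁ
  unit : (i (𝟙_ C)).hom ≫ (unitL (C := C))ᘁ = unitL (C := C)


section Aux
noncomputable section
section Generic
omit [RightRigidCategory C]

def tpCoev (A B A' B' : C) [ExactPairing A B] [ExactPairing A' B'] :
    𝟙_ C ⟶ (A ⊗ A') ⊗ (B' ⊗ B) :=
  η_ A B ≫ A ◁ ((λ_ B).inv ≫ η_ A' B' ▷ B ≫ (α_ A' B' B).hom) ≫ (α_ A A' (B' ⊗ B)).inv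

def tpEv (A B A' B' : C) [ExactPairing A B] [ExactPairing A' B'] :
    (B' ⊗ B) ⊗ (A ⊗ A') ⟶ 𝟙_ C :=
  (α_ B' B (A ⊗ A')).hom ≫ B' ◁ ((α_ B A A').inv ≫ ε_ A B ▷ A' ≫ (λ_ A').hom) ≫ ε_ A' B'

theorem tp_coev_ev (A B A' B' : C) [ExactPairing A B] [ExactPairing A' B'] :
    (B' ⊗ B) ◁ tpCoev A B A' B' ≫ (α_ _ _ _).inv ≫ tpEv A B A' B' ▷ (B' ⊗ B)
      = (ρ_ _).hom ≫ (λ_ _).inv := by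
  calc
    _ = 𝟙 _ ⊗≫ ((B' ⊗ B) : C) ◁ η_ A B ⊗≫
        B' ◁ (((B ⊗ A) ◁ η_ A' B' ≫ ε_ A B ▷ (A' ⊗ B')) ▷ B) ⊗≫
        ε_ A' B' ▷ (B' ⊗ B) ⊗≫ 𝟙 _ := by
      dsimp only [tpCoev, tpEv]; monoidal
    _ = 𝟙 _ ⊗≫ ((B' ⊗ B) : C) ◁ η_ A B ⊗≫
        B' ◁ ((ε_ A B ▷ (𝟙_ C) ≫ (𝟙_ C) ◁ η_ A' B') ▷ B) ⊗≫
        ε_ A' B' ▷ (B' ⊗ B) ⊗≫ 𝟙 _ := by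
      rw [whisker_exchange]
    _ = 𝟙 _ ⊗≫ B' ◁ (B ◁ η_ A B ⊗≫ ε_ A B ▷ B) ⊗≫ (B' ◁ η_ A' B') ▷ B ⊗≫
        ε_ A' B' ▷ (B' ⊗ B) ⊗≫ 𝟙 _ := by
      monoidal
    _ = 𝟙 _ ⊗≫ (B' ◁ η_ A' B' ⊗≫ ε_ A' B' ▷ B') ▷ B ⊗≫ 𝟙 _ := by
      rw [ExactPairing.coevaluation_evaluation'']; monoidal
    _ = _ := by
      rw [ExactPairing.coevaluation_evaluation'']; monoidal

theorem tp_ev_coev (A B A' B' : C) [ExactPairing A B] [ExactPairing A' B'] :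
    tpCoev A B A' B' ▷ (A ⊗ A') ≫ (α_ _ _ _).hom ≫ (A ⊗ A') ◁ tpEv A B A' B'
      = (λ_ _).hom ≫ (ρ_ _).inv := by
  calc
    _ = 𝟙 _ ⊗≫ η_ A B ▷ ((A ⊗ A') : C) ⊗≫
        A ◁ ((η_ A' B' ▷ (B ⊗ A) ≫ (A' ⊗ B') ◁ ε_ A B) ▷ A') ⊗≫
        (A ⊗ A') ◁ ε_ A' B' ⊗≫ 𝟙 _ := by
      dsimp only [tpCoev, tpEv]; monoidal
    _ = 𝟙 _ ⊗≫ η_ A B ▷ ((A ⊗ A') : C) ⊗≫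
        A ◁ (((𝟙_ C) ◁ ε_ A B ≫ η_ A' B' ▷ (𝟙_ C)) ▷ A') ⊗≫
        (A ⊗ A') ◁ ε_ A' B' ⊗≫ 𝟙 _ := by
      rw [← whisker_exchange]
    _ = 𝟙 _ ⊗≫ (η_ A B ▷ A ⊗≫ A ◁ ε_ A B) ▷ A' ⊗≫ A ◁ (η_ A' B' ▷ A') ⊗≫
        (A ⊗ A') ◁ ε_ A' B' ⊗≫ 𝟙 _ := by
      monoidal
    _ = 𝟙 _ ⊗≫ A ◁ (η_ A' B' ▷ A' ⊗≫ A' ◁ ε_ A' B') ⊗≫ 𝟙 _ := by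
      rw [ExactPairing.evaluation_coevaluation'']; monoidal
    _ = _ := by
      rw [ExactPairing.evaluation_coevaluation'']; monoidal


/-- The tensor product pairing: if `B` is a right dual of `A` and `B'` of `A'`,
then `B' ⊗ B` is a right dual of `A ⊗ A'`. -/
def tpair (A B A' B' : C) [ExactPairing A B] [ExactPairing A' B'] :
    ExactPairing (A ⊗ A') (B' ⊗ B) where
  coevaluation' := tpCoev A B A' B'
  evaluation' := tpEv A B A' B'
  coevaluation_evaluation' := tp_coev_ev A B A' B'
  evaluation_coevaluation' := tp_ev_coev A B A' B'

/-- Injectivity of the right adjoint mate, for arbitrary dual data. -/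
theorem rAM_inj {X Y : C} [hX : HasRightDual X] [hY : HasRightDual Y] {f g : X ⟶ Y}
    (h : fᘁ = gᘁ) : f = g := by
  have h1 := coevaluation_comp_rightAdjointMate f
  rw [h, coevaluation_comp_rightAdjointMate g] at h1
  have h2 := congrArg (tensorRightHomEquiv (𝟙_ C) X (Xᘁ) Y).symm h1
  simpa using h2.symm

/-- The right adjoint mate of the left adjoint mate is the original morphism. -/
theorem rAM_lAM {X Y : C} [hX : HasLeftDual X] [hY : HasLeftDual Y] (f : X ⟶ Y) :
    @rightAdjointMate C _ _ (ᘁY) (ᘁX) (hasRightDualLeftDual (X := Y))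
      (hasRightDualLeftDual (X := X)) (ᘁf) = f := by
  have h1 := @coevaluation_comp_rightAdjointMate C _ _ (ᘁY) (ᘁX)
    (hasRightDualLeftDual (X := Y)) (hasRightDualLeftDual (X := X)) (ᘁf)
  change η_ (ᘁX) X ≫ (ᘁX) ◁ _ = η_ (ᘁY) Y ≫ (ᘁf) ▷ Y at h1
  rw [coevaluation_comp_leftAdjointMate] at h1
  have h2 := congrArg (tensorLeftHomEquiv (𝟙_ C) (ᘁX) X Y).symm h1
  simpa using h2


/-- Package an `ExactPairing` as a `HasRightDual` instance. -/
abbrev HRD (A B : C) (p : ExactPairing A B) : HasRightDual A := @HasRightDual.mk C _ _ A B p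

/-- The canonical comparison morphism between two right duals of `A`. -/
def cmp {A B₁ B₂ : C} (p₁ : ExactPairing A B₁) (p₂ : ExactPairing A B₂) : B₂ ⟶ B₁ :=
  @rightAdjointMate C _ _ A A (HRD A B₁ p₁) (HRD A B₂ p₂) (𝟙 A)

theorem coev_cmp {A B₁ B₂ : C} (p₁ : ExactPairing A B₁) (p₂ : ExactPairing A B₂) :
    @ExactPairing.coevaluation C _ _ A B₂ p₂ ≫ A ◁ cmp p₁ p₂
      = @ExactPairing.coevaluation C _ _ A B₁ p₁ := by
  have := @coevaluation_comp_rightAdjointMate C _ _ A A (HRD A B₁ p₁) (HRD A B₂ p₂) (𝟙 A)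
  rw [id_whiskerRight, Category.comp_id] at this
  exact this

theorem tensor_cmp {A A' B₁ B₂ B₁' B₂' : C}
    (p₁ : ExactPairing A B₁) (p₂ : ExactPairing A B₂)
    (q₁ : ExactPairing A' B₁') (q₂ : ExactPairing A' B₂') :
    cmp (@tpair C _ _ A B₁ A' B₁' p₁ q₁) (@tpair C _ _ A B₂ A' B₂' p₂ q₂)
      = cmp q₁ q₂ ⊗ₘ cmp p₁ p₂ := by
  have h1 := coev_cmp (@tpair C _ _ A B₁ A' B₁' p₁ q₁) (@tpair C _ _ A B₂ A' B₂' p₂ q₂)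
  have h2 : @ExactPairing.coevaluation C _ _ _ _ (@tpair C _ _ A B₂ A' B₂' p₂ q₂)
        ≫ (A ⊗ A') ◁ (cmp q₁ q₂ ⊗ₘ cmp p₁ p₂)
      = @ExactPairing.coevaluation C _ _ _ _ (@tpair C _ _ A B₁ A' B₁' p₁ q₁) := by
    show tpCoev A B₂ A' B₂' ≫ (A ⊗ A') ◁ (cmp q₁ q₂ ⊗ₘ cmp p₁ p₂) = tpCoev A B₁ A' B₁'
    calc
      _ = 𝟙 _ ⊗≫ @ExactPairing.coevaluation C _ _ A B₂ p₂ ⊗≫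
          A ◁ (@ExactPairing.coevaluation C _ _ A' B₂' q₂ ▷ B₂ ≫ (A' ⊗ B₂') ◁ cmp p₁ p₂) ⊗≫
          A ◁ ((A' ◁ cmp q₁ q₂) ▷ B₁) ⊗≫ 𝟙 _ := by
        dsimp only [tpCoev]; rw [tensorHom_def']; monoidal
      _ = 𝟙 _ ⊗≫ @ExactPairing.coevaluation C _ _ A B₂ p₂ ⊗≫
          A ◁ ((𝟙_ C) ◁ cmp p₁ p₂ ≫ @ExactPairing.coevaluation C _ _ A' B₂' q₂ ▷ B₁) ⊗≫
          A ◁ ((A' ◁ cmp q₁ q₂) ▷ B₁) ⊗≫ 𝟙 _ := by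
        rw [← whisker_exchange]
      _ = 𝟙 _ ⊗≫ (@ExactPairing.coevaluation C _ _ A B₂ p₂ ≫ A ◁ cmp p₁ p₂) ⊗≫
          A ◁ ((@ExactPairing.coevaluation C _ _ A' B₂' q₂ ≫ A' ◁ cmp q₁ q₂) ▷ B₁) ⊗≫ 𝟙 _ := by
        monoidal
      _ = 𝟙 _ ⊗≫ @ExactPairing.coevaluation C _ _ A B₁ p₁ ⊗≫
          A ◁ (@ExactPairing.coevaluation C _ _ A' B₁' q₁ ▷ B₁) ⊗≫ 𝟙 _ := by
        rw [coev_cmp p₁ p₂, coev_cmp q₁ q₂]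
      _ = _ := by
        dsimp only [tpCoev]; monoidal
  have h3 := h1.trans h2.symm
  have h4 := congrArg (@tensorLeftHomEquiv C _ _ (𝟙_ C) (A ⊗ A') (B₂' ⊗ B₂) (B₁' ⊗ B₁)
    (@tpair C _ _ A B₂ A' B₂' p₂ q₂)).symm h3
  letI := @tpair C _ _ A B₂ A' B₂' p₂ q₂
  rw [tensorLeftHomEquiv_symm_coevaluation_comp_whiskerLeft,
    tensorLeftHomEquiv_symm_coevaluation_comp_whiskerLeft] at h4
  rwa [cancel_epi] at h4


/-- Package an `ExactPairing` as a `HasLeftDual` instance. -/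
abbrev HLD (A B : C) (p : ExactPairing B A) : HasLeftDual A := @HasLeftDual.mk C _ _ A B p

theorem key {X₀ Y₀ : C} (hlX : HasLeftDual X₀) (hlY : HasLeftDual Y₀) (f₀ : X₀ ⟶ Y₀)
    (k : HasRightDual (@HasLeftDual.leftDual C _ _ Y₀ hlY)) :
    @rightAdjointMate C _ _ (@HasLeftDual.leftDual C _ _ Y₀ hlY)
        (@HasLeftDual.leftDual C _ _ X₀ hlX) k (@hasRightDualLeftDual C _ _ X₀ hlX)
        (@leftAdjointMate C _ _ X₀ Y₀ hlX hlY f₀)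
      = f₀ ≫ @rightAdjointMate C _ _ (@HasLeftDual.leftDual C _ _ Y₀ hlY)
          (@HasLeftDual.leftDual C _ _ Y₀ hlY) k (@hasRightDualLeftDual C _ _ Y₀ hlY)
          (𝟙 _) := by
  have h := @comp_rightAdjointMate C _ _ _ _ _ k (@hasRightDualLeftDual C _ _ Y₀ hlY)
    (@hasRightDualLeftDual C _ _ X₀ hlX) (𝟙 _) (@leftAdjointMate C _ _ X₀ Y₀ hlX hlY f₀)
  rw [Category.id_comp] at h
  rw [h, @rAM_lAM C _ _ X₀ Y₀ hlX hlY f₀]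


end Generic
section RR

/-- The tensor pairing exhibiting `Yᘁ ⊗ Xᘁ` as right dual of `X ⊗ Y` (canonical duals). -/
def Tstd (X Y : C) : ExactPairing (X ⊗ Y) ((Yᘁ) ⊗ (Xᘁ)) := tpair X (Xᘁ) Y (Yᘁ)

theorem lamL_eq (X Y : C) :
    lamL X Y = @rightAdjointMate C _ _ (X ⊗ Y) (X ⊗ Y)
      (HRD _ _ (Tstd X Y)) inferInstance (𝟙 (X ⊗ Y)) := by
  have h : @rightAdjointMate C _ _ (X ⊗ Y) (X ⊗ Y)
        (HRD _ _ (Tstd X Y)) inferInstance (𝟙 (X ⊗ Y))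
      = (ρ_ ((X ⊗ Y)ᘁ)).inv ≫ ((X ⊗ Y)ᘁ ◁ coevTensor X Y) ≫
          ((X ⊗ Y)ᘁ ◁ ((𝟙 (X ⊗ Y)) ▷ (Yᘁ ⊗ Xᘁ))) ≫
          (α_ ((X ⊗ Y)ᘁ) (X ⊗ Y) (Yᘁ ⊗ Xᘁ)).inv ≫
          ε_ (X ⊗ Y) ((X ⊗ Y)ᘁ) ▷ (Yᘁ ⊗ Xᘁ) ≫ (λ_ (Yᘁ ⊗ Xᘁ)).hom := rfl
  rw [h, id_whiskerRight, MonoidalCategory.whiskerLeft_id, Category.id_comp]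
  rfl

theorem lamInvL_eq (X Y : C) :
    lamInvL X Y = @rightAdjointMate C _ _ (X ⊗ Y) (X ⊗ Y)
      inferInstance (HRD _ _ (Tstd X Y)) (𝟙 (X ⊗ Y)) := by
  have h : @rightAdjointMate C _ _ (X ⊗ Y) (X ⊗ Y)
      inferInstance (HRD _ _ (Tstd X Y)) (𝟙 (X ⊗ Y))
      = (ρ_ (Yᘁ ⊗ Xᘁ)).inv ≫ ((Yᘁ ⊗ Xᘁ) ◁ η_ (X ⊗ Y) ((X ⊗ Y)ᘁ)) ≫
          ((Yᘁ ⊗ Xᘁ) ◁ ((𝟙 (X ⊗ Y)) ▷ ((X ⊗ Y)ᘁ))) ≫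
          (α_ (Yᘁ ⊗ Xᘁ) (X ⊗ Y) ((X ⊗ Y)ᘁ)).inv ≫
          evTensor X Y ▷ ((X ⊗ Y)ᘁ) ≫ (λ_ ((X ⊗ Y)ᘁ)).hom := rfl
  rw [h, id_whiskerRight, MonoidalCategory.whiskerLeft_id, Category.id_comp]
  rfl

theorem unitL_eq :
    unitL (C := C) = @rightAdjointMate C _ _ (𝟙_ C) (𝟙_ C)
      inferInstance (HRD (𝟙_ C) (𝟙_ C) exactPairingUnit) (𝟙 (𝟙_ C)) := by
  have h : @rightAdjointMate C _ _ (𝟙_ C) (𝟙_ C)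
      inferInstance (HRD (𝟙_ C) (𝟙_ C) exactPairingUnit) (𝟙 (𝟙_ C))
      = (ρ_ (𝟙_ C)).inv ≫ ((𝟙_ C) ◁ η_ (𝟙_ C) ((𝟙_ C)ᘁ)) ≫
          ((𝟙_ C) ◁ ((𝟙 (𝟙_ C)) ▷ ((𝟙_ C)ᘁ))) ≫
          (α_ (𝟙_ C) (𝟙_ C) ((𝟙_ C)ᘁ)).inv ≫
          (ρ_ (𝟙_ C)).hom ▷ ((𝟙_ C)ᘁ) ≫ (λ_ ((𝟙_ C)ᘁ)).hom := rfl
  rw [h, id_whiskerRight, MonoidalCategory.whiskerLeft_id, Category.id_comp, unitL]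
  calc η_ (𝟙_ C) ((𝟙_ C)ᘁ) ≫ (λ_ ((𝟙_ C)ᘁ)).hom
      = 𝟙 _ ⊗≫ η_ (𝟙_ C) ((𝟙_ C)ᘁ) ⊗≫ 𝟙 _ := by monoidal
    _ = _ := by
      rw [MonoidalCategory.id_whiskerLeft (η_ (𝟙_ C) ((𝟙_ C)ᘁ))]
      monoidal

section OfQ
variable (Q : ∀ X : C, ExactPairing ((Xᘁ)) X)

/-- The candidate pivotal morphism coming from a second duality `Q`. -/
def iQ (X : C) : X ⟶ (Xᘁ)ᘁ :=
  @rightAdjointMate C _ _ (Xᘁ) (Xᘁ) inferInstance (HRD (Xᘁ) X (Q X)) (𝟙 (Xᘁ))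

def iQ' (X : C) : (Xᘁ)ᘁ ⟶ X :=
  @rightAdjointMate C _ _ (Xᘁ) (Xᘁ) (HRD (Xᘁ) X (Q X)) inferInstance (𝟙 (Xᘁ))

theorem iQ_iQ' (X : C) : iQ Q X ≫ iQ' Q X = 𝟙 X := by
  have h := @comp_rightAdjointMate C _ _ (Xᘁ) (Xᘁ) (Xᘁ)
    (HRD (Xᘁ) X (Q X)) inferInstance (HRD (Xᘁ) X (Q X)) (𝟙 _) (𝟙 _)
  rw [Category.id_comp] at h
  exact h.symm.trans (@rightAdjointMate_id C _ _ (Xᘁ) (HRD (Xᘁ) X (Q X)))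

theorem iQ'_iQ (X : C) : iQ' Q X ≫ iQ Q X = 𝟙 ((Xᘁ)ᘁ) := by
  have h := @comp_rightAdjointMate C _ _ (Xᘁ) (Xᘁ) (Xᘁ)
    inferInstance (HRD (Xᘁ) X (Q X)) inferInstance (𝟙 _) (𝟙 _)
  rw [Category.id_comp] at h
  exact h.symm.trans (@rightAdjointMate_id C _ _ (Xᘁ) inferInstance)

/-- The left adjoint mate of `f` with respect to the duality `Q`. -/
def lQ {X Y : C} (f : X ⟶ Y) : (Yᘁ) ⟶ (Xᘁ) :=
  @leftAdjointMate C _ _ X Y (HLD X (Xᘁ) (Q X)) (HLD Y (Yᘁ) (Q Y)) f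

theorem lQ_eq {X Y : C} (f : X ⟶ Y) :
    (λ_ (Yᘁ)).inv ≫ (Q X).coevaluation' ▷ (Yᘁ) ≫ (α_ (Xᘁ) X (Yᘁ)).hom ≫
        (Xᘁ) ◁ (f ▷ (Yᘁ)) ≫ (Xᘁ) ◁ (Q Y).evaluation' ≫ (ρ_ (Xᘁ)).hom = lQ Q f := by
  have h : lQ Q f
      = (λ_ _).inv ≫ (Q X).coevaluation' ▷ _ ≫ (((Xᘁ : C) ◁ f) ▷ _) ≫
          (α_ _ _ _).hom ≫ (Xᘁ : C) ◁ (Q Y).evaluation' ≫ (ρ_ _).hom := rfl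
  rw [h, associator_naturality_middle_assoc]

theorem nat_iff {X Y : C} (f : X ⟶ Y) :
    (f ≫ iQ Q Y = iQ Q X ≫ (fᘁ)ᘁ) ↔ lQ Q f = fᘁ := by
  have h1 : @rightAdjointMate C _ _ (Yᘁ) (Xᘁ) inferInstance (HRD (Xᘁ) X (Q X)) (lQ Q f)
      = f ≫ iQ Q Y :=
    key (HLD X (Xᘁ) (Q X)) (HLD Y (Yᘁ) (Q Y)) f (inferInstance : HasRightDual (Yᘁ))
  have h2 : @rightAdjointMate C _ _ (Yᘁ) (Xᘁ) inferInstance (HRD (Xᘁ) X (Q X)) (fᘁ)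
      = iQ Q X ≫ (fᘁ)ᘁ := by
    have h := @comp_rightAdjointMate C _ _ (Yᘁ) (Xᘁ) (Xᘁ)
      inferInstance inferInstance (HRD (Xᘁ) X (Q X)) (fᘁ) (𝟙 _)
    rw [Category.comp_id] at h
    exact h
  constructor
  · intro h
    exact @rAM_inj C _ _ (Yᘁ) (Xᘁ) inferInstance (HRD (Xᘁ) X (Q X)) _ _
      (by rw [h1, h2, h])
  · intro h
    rw [← h1, ← h2, h]

/-- The tensor pairing built from `Q`. -/
def TQ (X Y : C) : ExactPairing ((Yᘁ) ⊗ (Xᘁ)) (X ⊗ Y) :=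
  @tpair C _ _ (Yᘁ) Y (Xᘁ) X (Q Y) (Q X)

/-- The comparison `(X ⊗ Y)ᘁ ⟶ Yᘁ ⊗ Xᘁ` as a left adjoint mate for the `Q`-duality. -/
def c0 (X Y : C) : ((X ⊗ Y)ᘁ) ⟶ (Yᘁ) ⊗ (Xᘁ) :=
  @leftAdjointMate C _ _ (X ⊗ Y) (X ⊗ Y) (HLD (X ⊗ Y) ((Yᘁ) ⊗ (Xᘁ)) (TQ Q X Y))
    (HLD (X ⊗ Y) ((X ⊗ Y)ᘁ) (Q (X ⊗ Y))) (𝟙 (X ⊗ Y))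

theorem c0_eq (X Y : C) :
    c0 Q X Y = (λ_ ((X ⊗ Y)ᘁ)).inv ≫
        (((Q Y).coevaluation' ≫
            Yᘁ ◁ ((λ_ Y).inv ≫ (Q X).coevaluation' ▷ Y ≫ (α_ (Xᘁ) X Y).hom) ≫
              (α_ (Yᘁ) (Xᘁ) (X ⊗ Y)).inv) ▷ ((X ⊗ Y)ᘁ)) ≫
          (α_ (Yᘁ ⊗ Xᘁ) (X ⊗ Y) ((X ⊗ Y)ᘁ)).hom ≫
            ((Yᘁ ⊗ Xᘁ) ◁ (Q (X ⊗ Y)).evaluation') ≫ (ρ_ (Yᘁ ⊗ Xᘁ)).hom := by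
  have h : c0 Q X Y = (λ_ ((X ⊗ Y)ᘁ)).inv ≫
        (((Q Y).coevaluation' ≫
            Yᘁ ◁ ((λ_ Y).inv ≫ (Q X).coevaluation' ▷ Y ≫ (α_ (Xᘁ) X Y).hom) ≫
              (α_ (Yᘁ) (Xᘁ) (X ⊗ Y)).inv) ▷ ((X ⊗ Y)ᘁ)) ≫
          (((Yᘁ ⊗ Xᘁ) ◁ 𝟙 (X ⊗ Y)) ▷ ((X ⊗ Y)ᘁ)) ≫
          (α_ (Yᘁ ⊗ Xᘁ) (X ⊗ Y) ((X ⊗ Y)ᘁ)).hom ≫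
            ((Yᘁ ⊗ Xᘁ) ◁ (Q (X ⊗ Y)).evaluation') ≫ (ρ_ (Yᘁ ⊗ Xᘁ)).hom := rfl
  rw [h, MonoidalCategory.whiskerLeft_id, id_whiskerRight, Category.id_comp]

theorem mon_iff (X Y : C) :
    (iQ Q (X ⊗ Y) = (iQ Q X ⊗ₘ iQ Q Y) ≫ lamInvL (Yᘁ) (Xᘁ) ≫ (lamL X Y)ᘁ)
      ↔ lamL X Y = c0 Q X Y := by
  have ht : iQ Q X ⊗ₘ iQ Q Y = cmp (Tstd (Yᘁ) (Xᘁ)) (TQ Q X Y) :=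
    (tensor_cmp (A := (Yᘁ)) (A' := (Xᘁ))
      HasRightDual.exact (Q Y) HasRightDual.exact (Q X)).symm
  have h2 : cmp (Tstd (Yᘁ) (Xᘁ)) (TQ Q X Y) ≫ lamInvL (Yᘁ) (Xᘁ)
      = @rightAdjointMate C _ _ ((Yᘁ) ⊗ (Xᘁ)) ((Yᘁ) ⊗ (Xᘁ))
          inferInstance (HRD _ _ (TQ Q X Y)) (𝟙 _) := by
    rw [lamInvL_eq]
    have h := @comp_rightAdjointMate C _ _ ((Yᘁ) ⊗ (Xᘁ)) ((Yᘁ) ⊗ (Xᘁ)) ((Yᘁ) ⊗ (Xᘁ))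
      inferInstance (HRD _ _ (Tstd (Yᘁ) (Xᘁ))) (HRD _ _ (TQ Q X Y)) (𝟙 _) (𝟙 _)
    rw [Category.id_comp] at h
    exact h.symm
  have h3 : (@rightAdjointMate C _ _ ((Yᘁ) ⊗ (Xᘁ)) ((Yᘁ) ⊗ (Xᘁ))
          inferInstance (HRD _ _ (TQ Q X Y)) (𝟙 _)) ≫ (lamL X Y)ᘁ
      = @rightAdjointMate C _ _ ((X ⊗ Y)ᘁ) ((Yᘁ) ⊗ (Xᘁ))
          inferInstance (HRD _ _ (TQ Q X Y)) (lamL X Y) := by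
    have h := @comp_rightAdjointMate C _ _ ((X ⊗ Y)ᘁ) ((Yᘁ) ⊗ (Xᘁ)) ((Yᘁ) ⊗ (Xᘁ))
      inferInstance inferInstance (HRD _ _ (TQ Q X Y)) (lamL X Y) (𝟙 _)
    rw [Category.comp_id] at h
    exact h.symm
  have h4 : @rightAdjointMate C _ _ ((X ⊗ Y)ᘁ) ((Yᘁ) ⊗ (Xᘁ))
        inferInstance (HRD _ _ (TQ Q X Y)) (c0 Q X Y) = iQ Q (X ⊗ Y) := by
    have h := key (HLD (X ⊗ Y) ((Yᘁ) ⊗ (Xᘁ)) (TQ Q X Y))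
      (HLD (X ⊗ Y) ((X ⊗ Y)ᘁ) (Q (X ⊗ Y))) (𝟙 (X ⊗ Y))
      (inferInstance : HasRightDual ((X ⊗ Y)ᘁ))
    rw [Category.id_comp] at h
    exact h
  rw [ht, ← Category.assoc, h2, h3]
  constructor
  · intro h
    exact (@rAM_inj C _ _ ((X ⊗ Y)ᘁ) ((Yᘁ) ⊗ (Xᘁ))
      inferInstance (HRD _ _ (TQ Q X Y)) _ _ (by rw [← h, h4])).symm
  · intro h
    rw [h, h4]

theorem u0_eq :
    @leftAdjointMate C _ _ (𝟙_ C) (𝟙_ C) (HLD (𝟙_ C) ((𝟙_ C)ᘁ) (Q (𝟙_ C)))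
        (HLD (𝟙_ C) (𝟙_ C) exactPairingUnit) (𝟙 (𝟙_ C))
      = (Q (𝟙_ C)).coevaluation' ≫ (ρ_ ((𝟙_ C)ᘁ)).hom := by
  have h : @leftAdjointMate C _ _ (𝟙_ C) (𝟙_ C) (HLD (𝟙_ C) ((𝟙_ C)ᘁ) (Q (𝟙_ C)))
        (HLD (𝟙_ C) (𝟙_ C) exactPairingUnit) (𝟙 (𝟙_ C))
      = (λ_ (𝟙_ C)).inv ≫ (Q (𝟙_ C)).coevaluation' ▷ (𝟙_ C) ≫
          ((((𝟙_ C)ᘁ) ◁ 𝟙 (𝟙_ C)) ▷ (𝟙_ C)) ≫ (α_ ((𝟙_ C)ᘁ) (𝟙_ C) (𝟙_ C)).hom ≫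
          ((𝟙_ C)ᘁ) ◁ (ρ_ (𝟙_ C)).hom ≫ (ρ_ ((𝟙_ C)ᘁ)).hom := rfl
  rw [h, MonoidalCategory.whiskerLeft_id, id_whiskerRight, Category.id_comp,
    MonoidalCategory.whiskerRight_id ((Q (𝟙_ C)).coevaluation')]
  calc
    _ = 𝟙 _ ⊗≫ (Q (𝟙_ C)).coevaluation' ⊗≫
        (((𝟙_ C)ᘁ) ◁ (ρ_ (𝟙_ C)).hom ≫ (ρ_ ((𝟙_ C)ᘁ)).hom) := by monoidal
    _ = _ := by monoidal

theorem unit_iff :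
    (iQ Q (𝟙_ C) ≫ (unitL (C := C))ᘁ = unitL (C := C))
      ↔ unitL (C := C) = (Q (𝟙_ C)).coevaluation' ≫ (ρ_ ((𝟙_ C)ᘁ)).hom := by
  have h2 : @rightAdjointMate C _ _ (𝟙_ C) ((𝟙_ C)ᘁ)
        inferInstance (HRD ((𝟙_ C)ᘁ) (𝟙_ C) (Q (𝟙_ C))) (unitL (C := C))
      = iQ Q (𝟙_ C) ≫ (unitL (C := C))ᘁ := by
    have h := @comp_rightAdjointMate C _ _ (𝟙_ C) ((𝟙_ C)ᘁ) ((𝟙_ C)ᘁ)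
      inferInstance inferInstance (HRD ((𝟙_ C)ᘁ) (𝟙_ C) (Q (𝟙_ C)))
      (unitL (C := C)) (𝟙 _)
    rw [Category.comp_id] at h
    exact h
  have h4 : @rightAdjointMate C _ _ (𝟙_ C) ((𝟙_ C)ᘁ)
        inferInstance (HRD ((𝟙_ C)ᘁ) (𝟙_ C) (Q (𝟙_ C)))
        ((Q (𝟙_ C)).coevaluation' ≫ (ρ_ ((𝟙_ C)ᘁ)).hom)
      = unitL (C := C) := by
    have h := key (HLD (𝟙_ C) ((𝟙_ C)ᘁ) (Q (𝟙_ C)))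
      (HLD (𝟙_ C) (𝟙_ C) exactPairingUnit) (𝟙 (𝟙_ C))
      (inferInstance : HasRightDual (𝟙_ C))
    rw [Category.id_comp, u0_eq Q] at h
    exact h.trans (unitL_eq (C := C)).symm
  constructor
  · intro h
    refine (@rAM_inj C _ _ (𝟙_ C) ((𝟙_ C)ᘁ)
      inferInstance (HRD ((𝟙_ C)ᘁ) (𝟙_ C) (Q (𝟙_ C))) _ _ ?_).symm
    rw [h4, h2, h]
  · intro h
    rw [← h2]
    nth_rewrite 1 [h]
    rw [h4]

end OfQ

theorem coev_cancel {A B : C} (p : ExactPairing A B) {Z : C} {t t' : B ⟶ Z}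
    (h : @ExactPairing.coevaluation C _ _ A B p ≫ A ◁ t
      = @ExactPairing.coevaluation C _ _ A B p ≫ A ◁ t') : t = t' := by
  have h4 := congrArg (@tensorLeftHomEquiv C _ _ (𝟙_ C) A B Z p).symm h
  rw [@tensorLeftHomEquiv_symm_coevaluation_comp_whiskerLeft C _ _ A B Z p,
    @tensorLeftHomEquiv_symm_coevaluation_comp_whiskerLeft C _ _ A B Z p] at h4
  rwa [cancel_epi] at h4

theorem iQ_congr (i : ∀ X : C, X ≅ (Xᘁ)ᘁ) (X : C) :
    iQ (fun X => @exactPairingCongrRight C _ _ (Xᘁ) X ((Xᘁ)ᘁ) inferInstance (i X)) X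
      = (i X).hom := by
  set Q := fun X : C => @exactPairingCongrRight C _ _ (Xᘁ) X ((Xᘁ)ᘁ) inferInstance (i X)
    with hQ
  have hA : @ExactPairing.coevaluation C _ _ (Xᘁ) X (Q X) ≫ (Xᘁ) ◁ (iQ Q X)
      = η_ (Xᘁ) ((Xᘁ)ᘁ) := by
    have h := @coevaluation_comp_rightAdjointMate C _ _ (Xᘁ) (Xᘁ)
      inferInstance (HRD (Xᘁ) X (Q X)) (𝟙 (Xᘁ))
    rw [id_whiskerRight, Category.comp_id] at h
    exact h
  have hB : @ExactPairing.coevaluation C _ _ (Xᘁ) X (Q X) ≫ (Xᘁ) ◁ (i X).hom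
      = η_ (Xᘁ) ((Xᘁ)ᘁ) := by
    have h : @ExactPairing.coevaluation C _ _ (Xᘁ) X (Q X)
        = η_ (Xᘁ) ((Xᘁ)ᘁ) ≫ (Xᘁ) ◁ (i X).inv := rfl
    rw [h, Category.assoc, ← MonoidalCategory.whiskerLeft_comp, Iso.inv_hom_id,
      MonoidalCategory.whiskerLeft_id, Category.comp_id]
  exact coev_cancel (Q X) (hA.trans hB.symm)

end RR

end
end Aux

end SovereignPaper

open SovereignPaper in
/-- A (paper-)left rigid monoidal category admits a pivotal
structure iff it is sovereign. -/
theorem pivotal_iff_sovereign (C : Type*) [Category C] [MonoidalCategory C]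
    [RightRigidCategory C] :
    Nonempty (PivotalStruct C) ↔ Nonempty (SovereignStruct C) := by
  constructor
  · rintro ⟨P⟩
    refine ⟨?_⟩
    set Q := fun X : C => @exactPairingCongrRight C _ _ (Xᘁ) X ((Xᘁ)ᘁ) inferInstance (P.i X)
      with hQ
    have hiQ : ∀ X : C, iQ Q X = (P.i X).hom := iQ_congr P.i
    refine ⟨fun X => (Q X).evaluation', fun X => (Q X).coevaluation',
      fun X => (Q X).coevaluation_evaluation', fun X => (Q X).evaluation_coevaluation',
      ?_, ?_, ?_⟩
    · intro X Y f
      rw [lQ_eq Q f]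
      exact (nat_iff Q f).mp (by rw [hiQ, hiQ]; exact P.naturality f)
    · intro X Y
      rw [(mon_iff Q X Y).mp (by rw [hiQ, hiQ, hiQ]; exact P.monoidal X Y), c0_eq]
    · rw [(unit_iff Q).mp (by rw [hiQ]; exact P.unit)]
  · rintro ⟨S⟩
    refine ⟨?_⟩
    set Q := fun X : C => (⟨S.coev' X, S.ev' X, S.zigzag₁ X, S.zigzag₂ X⟩ :
      ExactPairing (Xᘁ) X) with hQ
    have hmate : ∀ {X Y : C} (f : X ⟶ Y), lQ Q f = fᘁ := by
      intro X Y f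
      rw [← lQ_eq Q f]
      exact S.mate_eq f
    refine ⟨fun X => ⟨iQ Q X, iQ' Q X, iQ_iQ' Q X, iQ'_iQ Q X⟩, ?_, ?_, ?_⟩
    · intro X Y f
      exact (nat_iff Q f).mpr (hmate f)
    · intro X Y
      exact (mon_iff Q X Y).mpr (by rw [c0_eq]; exact S.mon_eq X Y)
    · exact (unit_iff Q).mpr (by rw [S.unit_eq]; rfl)
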